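/- Let k ≥ 2 and let f : ℕ → 𝕂 be a k-regular sequence represented by f(n) = wᵀ A_{i_0} ⋯ A_{i_s} v where (n)_k = i_s ⋯ i_0 and 𝒜_f = {A_0, ..., A_{k-1}}. Then for every ε > 0 there is a constant c = c(ε) > 0 such that |f(n)| ≤ c · n^{log_k(ρ(𝒜_f) + ε)} for all n ≥ 1. -/

import Mathlib

open Filter Matrix

noncomputable def mnorm {d : ℕ} (A : Matrix (Fin d) (Fin d) ℂ) : ℝ :=
  ‖Matrix.toEuclideanCLM (𝕜 := ℂ) (n := Fin d) A‖

/-- The joint spectral radius of a finite family of matrices. -/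
noncomputable def jsr {k d : ℕ} (A : Fin k → Matrix (Fin d) (Fin d) ℂ) : ℝ :=
  Filter.limsup (fun n : ℕ =>
    ⨆ w : Fin n → Fin k, mnorm (List.ofFn (fun j => A (w j))).prod ^ ((n : ℝ)⁻¹))
    Filter.atTop

/-- The spectral radius of a single matrix. -/
noncomputable def specRad {d : ℕ} (A : Matrix (Fin d) (Fin d) ℂ) : ℝ :=
  (spectralRadius ℂ A).toReal

/-- The k-kernel of a sequence. -/
def kKernel {K : Type*} (k : ℕ) (f : ℕ → K) : Set (ℕ → K) :=
  {g | ∃ ℓ r : ℕ, r < k ^ ℓ ∧ g = fun n => f (k ^ ℓ * n + r)}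

/-- A sequence is k-regular if the span of its k-kernel is finite dimensional. -/
def IsKRegular (K : Type*) [Field K] (k : ℕ) (f : ℕ → K) : Prop :=
  FiniteDimensional K (Submodule.span K (kKernel k f))

/-- The product A_{i_0} ⋯ A_{i_s} along the base-k digits (n)_k = i_s ⋯ i_0 of n. -/
def digProd {K : Type*} [Semiring K] {d k : ℕ} (A : Fin k → Matrix (Fin d) (Fin d) K)
    (n : ℕ) : Matrix (Fin d) (Fin d) K :=
  ((Nat.digits k n).map (fun i => if h : i < k then A ⟨i, h⟩ else 1)).prod

lemma mnorm_nonneg {d : ℕ} (A : Matrix (Fin d) (Fin d) ℂ) : 0 ≤ mnorm A := norm_nonneg _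

lemma mnorm_one_le {d : ℕ} : mnorm (1 : Matrix (Fin d) (Fin d) ℂ) ≤ 1 := by
  rw [mnorm, _root_.map_one]
  exact ContinuousLinearMap.norm_id_le

lemma mnorm_mul_le {d : ℕ} (X Y : Matrix (Fin d) (Fin d) ℂ) :
    mnorm (X * Y) ≤ mnorm X * mnorm Y := by
  rw [mnorm, _root_.map_mul]
  exact norm_mul_le _ _

lemma mnorm_list_prod_le {k d : ℕ} (A : Fin k → Matrix (Fin d) (Fin d) ℂ) (l : List (Fin k)) :
    mnorm (l.map A).prod ≤ (1 + ∑ i, mnorm (A i)) ^ l.length := by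
  have hsum : (0:ℝ) ≤ ∑ i, mnorm (A i) := Finset.sum_nonneg fun i _ => mnorm_nonneg _
  induction l with
  | nil => simpa using mnorm_one_le.trans (by linarith)
  | cons h t ih =>
    simp only [List.map_cons, List.prod_cons, List.length_cons]
    calc mnorm (A h * (t.map A).prod) ≤ mnorm (A h) * mnorm (t.map A).prod := mnorm_mul_le _ _
      _ ≤ (1 + ∑ i, mnorm (A i)) * (1 + ∑ i, mnorm (A i)) ^ t.length := by
          refine mul_le_mul ?_ ih (mnorm_nonneg _) (by linarith)
          have : mnorm (A h) ≤ ∑ i, mnorm (A i) :=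
            Finset.single_le_sum (fun i _ => mnorm_nonneg (A i)) (Finset.mem_univ h)
          linarith
      _ = (1 + ∑ i, mnorm (A i)) ^ (t.length + 1) := (pow_succ' _ _).symm

lemma exists_dot_bound {d : ℕ} (w v : Fin d → ℂ) :
    ∃ C : ℝ, 0 ≤ C ∧ ∀ M : Matrix (Fin d) (Fin d) ℂ,
      ‖dotProduct w (M.mulVec v)‖ ≤ C * mnorm M := by
  set wE : EuclideanSpace ℂ (Fin d) := (WithLp.equiv 2 (Fin d → ℂ)).symm (star w) with hwE
  set vE : EuclideanSpace ℂ (Fin d) := (WithLp.equiv 2 (Fin d → ℂ)).symm v with hvE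
  refine ⟨‖wE‖ * ‖vE‖, mul_nonneg (norm_nonneg _) (norm_nonneg _), fun M => ?_⟩
  have h1 : dotProduct w (M.mulVec v) =
      inner (𝕜 := ℂ) wE (Matrix.toEuclideanCLM (𝕜 := ℂ) (n := Fin d) M vE) := by
    rw [hvE, WithLp.equiv_symm_apply, Matrix.toEuclideanCLM_toLp]
    simp only [PiLp.inner_apply, RCLike.inner_apply]
    rw [dotProduct]
    congr 1
    ext i
    simp [hwE, Matrix.toLin'_apply, WithLp.equiv_symm_apply, Pi.star_apply, RCLike.star_def, mul_comm]
  rw [h1]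
  calc ‖inner (𝕜 := ℂ) wE (Matrix.toEuclideanCLM (𝕜 := ℂ) (n := Fin d) M vE)‖
      ≤ ‖wE‖ * ‖Matrix.toEuclideanCLM (𝕜 := ℂ) (n := Fin d) M vE‖ := norm_inner_le_norm _ _
    _ ≤ ‖wE‖ * (mnorm M * ‖vE‖) := by
        refine mul_le_mul_of_nonneg_left ?_ (norm_nonneg _)
        exact ContinuousLinearMap.le_opNorm _ _
    _ = ‖wE‖ * ‖vE‖ * mnorm M := by ring

lemma digProd_eq_word {k d : ℕ} (hk : 2 ≤ k) (A : Fin k → Matrix (Fin d) (Fin d) ℂ) (n : ℕ) :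
    ∃ l' : List (Fin k), l'.length = (Nat.digits k n).length ∧
      digProd A n = (l'.map A).prod := by
  have hlt : ∀ i ∈ Nat.digits k n, i < k := fun i hi => Nat.digits_lt_base (by omega) hi
  refine ⟨(Nat.digits k n).pmap (fun i h => (⟨i, h⟩ : Fin k)) hlt, List.length_pmap, ?_⟩
  rw [digProd, List.map_pmap]
  congr 1
  rw [← List.pmap_eq_map (p := fun i => i < k) hlt]
  exact List.pmap_congr_left _ fun i hi h1 h2 => by rw [dif_pos]

theorem stmt2 {k d : ℕ} (hk : 2 ≤ k) (f : ℕ → ℂ)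
    (A : Fin k → Matrix (Fin d) (Fin d) ℂ) (v w : Fin d → ℂ)
    (hrep : ∀ n : ℕ, f n = dotProduct w ((digProd A n).mulVec v))
    (ε : ℝ) (hε : 0 < ε) :
    ∃ c : ℝ, 0 < c ∧ ∀ n : ℕ, 1 ≤ n →
      ‖f n‖ ≤ c * (n : ℝ) ^ Real.logb k (jsr A + ε) := by
  classical
  obtain ⟨C, hC0, hC⟩ := exists_dot_bound w v
  set M : ℝ := 1 + ∑ i, mnorm (A i) with hM
  have hM1 : (1:ℝ) ≤ M :=
    le_add_of_nonneg_right (Finset.sum_nonneg fun i _ => mnorm_nonneg _)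
  have hM0 : (0:ℝ) < M := lt_of_lt_of_le one_pos hM1
  have hk1 : (1:ℝ) < (k:ℝ) := by exact_mod_cast (by omega : 1 < k)
  have hk0 : (0:ℝ) < (k:ℝ) := by linarith
  set s : ℕ → ℝ := fun n => ⨆ w : Fin n → Fin k,
      mnorm (List.ofFn (fun j => A (w j))).prod ^ ((n : ℝ)⁻¹) with hs
  have hkne : ∀ n, Nonempty (Fin n → Fin k) := fun n => ⟨fun _ => ⟨0, by omega⟩⟩
  have hterm : ∀ n (ω : Fin n → Fin k),
      mnorm (List.ofFn (fun j => A (ω j))).prod ≤ M ^ n := by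
    intro n ω
    have h : List.ofFn (fun j => A (ω j)) = (List.ofFn ω).map A := by
      rw [List.map_ofFn]; rfl
    rw [h]
    simpa using mnorm_list_prod_le A (List.ofFn ω)
  have hsle : ∀ n, s n ≤ M := by
    intro n
    have := hkne n
    refine ciSup_le fun ω => ?_
    rcases Nat.eq_zero_or_pos n with rfl | hn
    · simpa using hM1
    · calc mnorm (List.ofFn (fun j => A (ω j))).prod ^ ((n:ℝ)⁻¹)
          ≤ (M ^ n) ^ ((n:ℝ)⁻¹) :=
            Real.rpow_le_rpow (mnorm_nonneg _) (hterm n ω) (by positivity)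
        _ = M := by
            rw [← Real.rpow_natCast M n, ← Real.rpow_mul hM0.le,
              mul_inv_cancel₀ (by exact_mod_cast hn.ne'), Real.rpow_one]
  have hs0 : ∀ n, 0 ≤ s n := by
    intro n
    obtain ⟨ω⟩ := hkne n
    calc (0:ℝ) ≤ mnorm (List.ofFn (fun j => A (ω j))).prod ^ ((n:ℝ)⁻¹) :=
          Real.rpow_nonneg (mnorm_nonneg _) _
      _ ≤ s n := by
          simp only [hs]
          exact le_ciSup (f := fun ω : Fin n → Fin k =>
            mnorm (List.ofFn (fun j => A (ω j))).prod ^ ((n : ℝ)⁻¹))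
            (Set.Finite.bddAbove (Set.finite_range _)) ω
  have hbdd : IsBoundedUnder (· ≤ ·) atTop s := isBoundedUnder_of ⟨M, fun n => hsle n⟩
  have hjsr : jsr A = Filter.limsup s atTop := rfl
  have hρ0 : 0 ≤ jsr A := by
    rw [hjsr]
    exact le_limsup_of_frequently_le (Frequently.of_forall hs0) hbdd
  set r : ℝ := jsr A + ε with hr
  have hr0 : (0:ℝ) < r := by linarith
  set e : ℝ := Real.logb k r with he
  have hke : (k:ℝ) ^ e = r := Real.rpow_logb hk0 hk1.ne' hr0
  obtain ⟨N, hN⟩ : ∃ N : ℕ, ∀ n ≥ N, s n < r := by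
    have : ∀ᶠ n in atTop, s n < r := by
      refine eventually_lt_of_limsup_lt ?_ hbdd
      rw [← hjsr]; linarith
    exact eventually_atTop.mp this
  -- bound for long words
  have hword : ∀ (l' : List (Fin k)), N ≤ l'.length →
      mnorm ((l'.map A).prod) ≤ r ^ l'.length := by
    intro l' hL
    rcases Nat.eq_zero_or_pos l'.length with h0 | hpos
    · rw [List.length_eq_zero_iff] at h0
      subst h0
      simp only [List.map_nil, List.prod_nil, List.length_nil, pow_zero]
      exact mnorm_one_le
    have hn0 : ((l'.length : ℝ)) ≠ 0 := by exact_mod_cast hpos.ne'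
    set n := l'.length with hn
    set ω : Fin n → Fin k := l'.get with hω
    have h1 : (l'.map A) = List.ofFn (fun j => A (ω j)) := by
      rw [hω]
      conv_lhs => rw [← List.ofFn_get l']
      rw [List.map_ofFn]
      rfl
    have h2 : mnorm ((l'.map A).prod) ^ ((n:ℝ)⁻¹) ≤ s n := by
      rw [h1]
      simp only [hs]
      exact le_ciSup (f := fun ω : Fin n → Fin k =>
        mnorm (List.ofFn (fun j => A (ω j))).prod ^ ((n : ℝ)⁻¹))
        (Set.Finite.bddAbove (Set.finite_range _)) ω
    have h3 : mnorm ((l'.map A).prod) ^ ((n:ℝ)⁻¹) ≤ r := h2.trans (hN n hL).le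
    calc mnorm ((l'.map A).prod)
        = (mnorm ((l'.map A).prod) ^ ((n:ℝ)⁻¹)) ^ (n:ℝ) := by
          rw [← Real.rpow_mul (mnorm_nonneg _), inv_mul_cancel₀ hn0, Real.rpow_one]
      _ ≤ r ^ (n:ℝ) :=
          Real.rpow_le_rpow (Real.rpow_nonneg (mnorm_nonneg _) _) h3 (Nat.cast_nonneg n)
      _ = r ^ n := Real.rpow_natCast r n
  -- key rpow identity: r ^ L = ((k:ℝ) ^ L) ^ e
  have hrL : ∀ L : ℕ, r ^ L = ((k:ℝ) ^ L) ^ e := by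
    intro L
    rw [← hke, ← Real.rpow_natCast ((k:ℝ) ^ e) L, ← Real.rpow_natCast (k:ℝ) L,
      ← Real.rpow_mul hk0.le, ← Real.rpow_mul hk0.le, mul_comm]
  set m : ℝ := min 1 (r ^ N) with hm
  have hm0 : 0 < m := lt_min one_pos (pow_pos hr0 N)
  set c : ℝ := (max (C * max 1 r) (C * M ^ N / m)) + 1 with hc
  have hc1 : C * max 1 r ≤ c := by
    have h := le_max_left (C * max 1 r) (C * M ^ N / m)
    rw [hc]; linarith
  have hc2 : C * M ^ N / m ≤ c := by
    have h := le_max_right (C * max 1 r) (C * M ^ N / m)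
    rw [hc]; linarith
  have hcpos : 0 < c := by
    have h1 : 0 ≤ C * max 1 r := mul_nonneg hC0 (le_trans zero_le_one (le_max_left _ _))
    have h := le_max_left (C * max 1 r) (C * M ^ N / m)
    rw [hc]; linarith
  refine ⟨c, hcpos, fun n hn => ?_⟩
  have hnpos : (0:ℝ) < (n:ℝ) := by exact_mod_cast hn
  have hne0 : (0:ℝ) ≤ (n:ℝ) ^ e := Real.rpow_nonneg hnpos.le _
  obtain ⟨l', hlen, hdig⟩ := digProd_eq_word hk A n
  set L : ℕ := (Nat.digits k n).length with hL
  have hLpos : 1 ≤ L := by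
    rw [hL]
    have : Nat.digits k n ≠ [] := Nat.digits_ne_nil_iff_ne_zero.mpr (by omega)
    exact List.length_pos_iff.mpr this
  have hnk : (n:ℝ) < (k:ℝ) ^ L := by
    have := Nat.lt_base_pow_length_digits (b := k) (m := n) (by omega)
    exact_mod_cast this
  have hkn : (k:ℝ) ^ L ≤ (k:ℝ) * n := by
    have := Nat.base_pow_length_digits_le k n (by omega) (by omega)
    exact_mod_cast this
  -- bound ‖f n‖ by C * mnorm (digProd A n)
  have hf : ‖f n‖ ≤ C * mnorm (digProd A n) := by rw [hrep n]; exact hC _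
  by_cases hLN : N ≤ L
  · -- large case
    have h1 : mnorm (digProd A n) ≤ r ^ L := by
      have h := hword l' (by rw [hlen]; exact hLN)
      rw [hlen] at h
      rw [hdig]
      exact h
    have h2 : r ^ L ≤ max 1 r * (n:ℝ) ^ e := by
      rcases le_or_gt 0 e with he0 | he0
      · calc r ^ L = ((k:ℝ) ^ L) ^ e := hrL L
          _ ≤ ((k:ℝ) * n) ^ e := Real.rpow_le_rpow (by positivity) hkn he0
          _ = (k:ℝ) ^ e * (n:ℝ) ^ e := Real.mul_rpow hk0.le hnpos.le
          _ = r * (n:ℝ) ^ e := by rw [hke]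
          _ ≤ max 1 r * (n:ℝ) ^ e :=
            mul_le_mul_of_nonneg_right (le_max_right 1 r) hne0
      · calc r ^ L = ((k:ℝ) ^ L) ^ e := hrL L
          _ ≤ (n:ℝ) ^ e := Real.rpow_le_rpow_of_nonpos hnpos hnk.le he0.le
          _ ≤ max 1 r * (n:ℝ) ^ e := le_mul_of_one_le_left hne0 (le_max_left 1 r)
    calc ‖f n‖ ≤ C * mnorm (digProd A n) := hf
      _ ≤ C * (max 1 r * (n:ℝ) ^ e) :=
          mul_le_mul_of_nonneg_left (h1.trans h2) hC0
      _ = (C * max 1 r) * (n:ℝ) ^ e := by ring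
      _ ≤ c * (n:ℝ) ^ e := mul_le_mul_of_nonneg_right hc1 hne0
  · -- small case : L < N
    push_neg at hLN
    have h1 : mnorm (digProd A n) ≤ M ^ N := by
      rw [hdig]
      calc mnorm ((l'.map A).prod) ≤ M ^ l'.length := mnorm_list_prod_le A l'
        _ ≤ M ^ N := pow_le_pow_right₀ hM1 (by omega)
    have h2 : m ≤ (n:ℝ) ^ e := by
      rcases le_or_gt 0 e with he0 | he0
      · exact (min_le_left _ _).trans (Real.one_le_rpow (by exact_mod_cast hn) he0)
      · refine (min_le_right _ _).trans ?_
        have hnN : (n:ℝ) ≤ (k:ℝ) ^ N := by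
          refine hnk.le.trans ?_
          exact pow_le_pow_right₀ hk1.le (by omega)
        calc r ^ N = ((k:ℝ) ^ N) ^ e := hrL N
          _ ≤ (n:ℝ) ^ e := Real.rpow_le_rpow_of_nonpos hnpos hnN he0.le
    calc ‖f n‖ ≤ C * mnorm (digProd A n) := hf
      _ ≤ C * M ^ N := mul_le_mul_of_nonneg_left h1 hC0
      _ = (C * M ^ N / m) * m := by field_simp
      _ ≤ c * (n:ℝ) ^ e := by
          refine mul_le_mul hc2 h2 hm0.le hcpos.le
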